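/- Under the same hypotheses (∂₁α(x,x) = 0 for all x on the diagonal, reading as: for each x, the map y ↦ α(y,x) has a critical point at y = x), the second derivative of the fitness function satisfies ∂₁₁f(x,x) = λ''(x) - ∂₁₁α(x,x)λ(x) + λ(x)α(x,x)p''(x)/(1-p(x)). -/

import Mathlib

/-- Second derivative of the invasion fitness
`f(y,x) = λ(y) - α(y,x)λ(x)(1-p(y))/(1-p(x))` along the diagonal:
`∂₁₁f(x,x) = λ''(x) - ∂₁₁α(x,x)λ(x) + λ(x)α(x,x)p''(x)/(1-p(x))`,
assuming that for each `x` the map `y ↦ α(y,x)` has a critical point at `y = x`. -/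
theorem second_derivative_fitness_diagonal
    (lam p : ℝ → ℝ) (alpha : ℝ → ℝ → ℝ) (x : ℝ)
    (hlam : ContDiff ℝ 2 lam) (hp : ContDiff ℝ 2 p)
    (halpha : ∀ z : ℝ, ContDiff ℝ 2 (fun y => alpha y z))
    (hp0 : 0 ≤ p x) (hp1 : p x < 1)
    (hcrit : ∀ z : ℝ, deriv (fun y => alpha y z) z = 0)
    (f : ℝ → ℝ → ℝ)
    (hf : ∀ y z, f y z = lam y - alpha y z * lam z * (1 - p y) / (1 - p z)) :
    deriv (deriv (fun y => f y x)) x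
      = deriv (deriv lam) x - deriv (deriv (fun y => alpha y x)) x * lam x
        + lam x * alpha x x * deriv (deriv p) x / (1 - p x) := by
  have hne : (1 : ℝ) - p x ≠ 0 := by linarith
  set a : ℝ → ℝ := fun y => alpha y x with ha
  have hca : ContDiff ℝ 2 a := halpha x
  set c : ℝ := lam x / (1 - p x) with hc
  have one_le : (1 : WithTop ℕ∞) ≤ 2 := by norm_num
  have hda : Differentiable ℝ a := hca.differentiable two_ne_zero
  have hdp : Differentiable ℝ p := hp.differentiable two_ne_zero
  have hdl : Differentiable ℝ lam := hlam.differentiable two_ne_zero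
  have hsucc : ∀ g : ℝ → ℝ, ContDiff ℝ 2 g → Differentiable ℝ (deriv g) := by
    intro g hg
    have h' : ContDiff ℝ ((1 : WithTop ℕ∞) + 1) g := by
      convert hg using 2
      exact one_add_one_eq_two
    exact ((contDiff_succ_iff_deriv.mp h').2.2).differentiable one_ne_zero
  have hda' : Differentiable ℝ (deriv a) := hsucc a hca
  have hdp' : Differentiable ℝ (deriv p) := hsucc p hp
  have hdl' : Differentiable ℝ (deriv lam) := hsucc lam hlam
  have key : (fun y => f y x) = fun y => lam y - c * (a y * (1 - p y)) := by
    funext y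
    rw [hf, hc]
    field_simp
    ring
  have H : ∀ y : ℝ, HasDerivAt (fun y => lam y - c * (a y * (1 - p y)))
      (deriv lam y - c * (deriv a y * (1 - p y) + a y * (-deriv p y))) y := by
    intro y
    exact ((hdl y).hasDerivAt).sub ((((hda y).hasDerivAt).mul
      (((hdp y).hasDerivAt).const_sub 1)).const_mul c)
  have hd1 : deriv (fun y => f y x)
      = fun y => deriv lam y - c * (deriv a y * (1 - p y) + a y * (-deriv p y)) := by
    rw [key]; funext y; exact (H y).deriv
  rw [hd1]
  have H2 : HasDerivAt
      (fun y => deriv lam y - c * (deriv a y * (1 - p y) + a y * (-deriv p y)))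
      (deriv (deriv lam) x - c * ((deriv (deriv a) x * (1 - p x) + deriv a x * (-deriv p x))
        + (deriv a x * (-deriv p x) + a x * (-(deriv (deriv p) x))))) x := by
    exact ((hdl' x).hasDerivAt).sub
      (((((hda' x).hasDerivAt).mul (((hdp x).hasDerivAt).const_sub 1)).add
        (((hda x).hasDerivAt).mul ((hdp' x).hasDerivAt).neg)).const_mul c)
  rw [H2.deriv]
  have hax : deriv a x = 0 := hcrit x
  rw [hax, hc]
  field_simp
  ring
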